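/- arXiv:math/0212196 — 2 statements merged into one kernel-verified Lean document; each statement's English description precedes it below -/
import Mathlib

section
/- For every n ≥ 1, the Ratliff-Rush closure of the filtration with respect to K satisfies rr_K(I_n) = ⋃_{k≥1} (K·I_{nk+n} : I_n^k); that is, the union over k of the colon ideals (K·I_{n+k} : I_1^k) equals the union over k of the colon ideals (K·I_{nk+n} : I_n^k). -/
set_option synthInstance.maxHeartbeats 1000000
set_option maxHeartbeats 1000000

open IsLocalRing Polynomial

/-- Ratliff–Rush closure of a filtration `{I_n}` with respect to `K`:
`rr_K(I_n) = ⋃_{k ≥ 1} (K·I_{n+k} : I_1^k)`. -/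
noncomputable def rrK {R : Type*} [CommRing R] (K : Ideal R) (I : ℕ → Ideal R) (n : ℕ) :
    Ideal R :=
  ⨆ k : ℕ, Submodule.colon (K * I (n + (k + 1))) (((I 1) ^ (k + 1) : Ideal R) : Set R)

/-- Key colon manipulation lemma. -/
lemma colon_key {R : Type*} [CommRing R] {K A B C D E : Ideal R} {x : R}
    (hx : x ∈ Submodule.colon (K * A) B) (hC : C ≤ B * D) (hE : A * D ≤ E) :
    x ∈ Submodule.colon (K * E) C := by
  rw [Submodule.mem_colon] at hx ⊢
  intro p hp
  have hKE : K * A * D ≤ K * E := by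
    rw [mul_assoc]; exact Ideal.mul_mono le_rfl hE
  refine Submodule.mul_induction_on (hC hp) ?_ ?_
  · intro b hb d hd
    have h1 : x * b ∈ K * A := by simpa [smul_eq_mul] using hx b hb
    have h2 : (x * b) * d ∈ K * A * D := Ideal.mul_mem_mul h1 hd
    have h3 : x • (b * d) ∈ K * A * D := by
      rwa [smul_eq_mul, ← mul_assoc]
    exact hKE h3
  · intro p q hp hq
    simpa [smul_eq_mul, mul_add] using Ideal.add_mem _ hp hq

/-- For a Hilbert filtration `{I_n}` of a Noetherian local ring of positive dimension and
an ideal `K` with `I_{n+1} ⊆ K·I_n` for all `n`, the Ratliff–Rush closure with respect to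
`K` satisfies `rr_K(I_n) = ⋃_{k ≥ 1} (K·I_{nk+n} : I_n^k)` for every `n ≥ 1`. -/
theorem stmt0 {R : Type*} [CommRing R] [IsNoetherianRing R] [IsLocalRing R]
    (hdim : (0 : WithBot ℕ∞) < ringKrullDim R)
    (I : ℕ → Ideal R) (K : Ideal R)
    (hI0 : I 0 = ⊤)
    (hImul : ∀ m n : ℕ, I m * I n ≤ I (m + n))
    (hIstab : ∃ N : ℕ, ∀ n ≥ N, I 1 * I n = I (n + 1))
    (hIprim : (I 1).radical = maximalIdeal R)
    (hK : ∀ n : ℕ, I (n + 1) ≤ K * I n) :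
    ∀ n : ℕ, 1 ≤ n →
      rrK K I n =
        ⨆ k : ℕ, Submodule.colon (K * I (n * (k + 1) + n)) (((I n) ^ (k + 1) : Ideal R) : Set R) := by
  intro n hn
  obtain ⟨N, hN⟩ := hIstab
  have hpow1 : ∀ m : ℕ, I 1 ^ m ≤ I m := by
    intro m
    induction m with
    | zero => simp [hI0]
    | succ m ih =>
      rw [pow_succ]
      exact le_trans (Ideal.mul_mono ih le_rfl) (hImul m 1)
  have hpown : ∀ j m : ℕ, I j ^ m ≤ I (j * m) := by
    intro j m
    induction m with
    | zero => simp [hI0]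
    | succ m ih =>
      rw [pow_succ]
      refine le_trans (le_trans (Ideal.mul_mono ih le_rfl) (hImul _ _)) ?_
      rw [Nat.mul_succ]
  have hstab : ∀ q m : ℕ, N ≤ m → I (m + q) = I 1 ^ q * I m := by
    intro q
    induction q with
    | zero => intro m _; simp
    | succ q ih =>
      intro m hm
      rw [show m + (q + 1) = (m + q) + 1 from rfl,
        ← hN (m + q) (le_trans hm (Nat.le_add_right m q)), ih m hm, pow_succ]
      ring
  unfold rrK
  apply le_antisymm
  · refine iSup_le fun k => ?_
    intro x hx
    set j : ℕ := N + k with hj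
    have harith : (k + 1) + (n * (j + 1) - (k + 1)) = n * (j + 1) := by
      have : k + 1 ≤ n * (j + 1) := by
        calc k + 1 ≤ j + 1 := by omega
        _ = 1 * (j + 1) := (one_mul _).symm
        _ ≤ n * (j + 1) := Nat.mul_le_mul_right _ hn
      omega
    have hNle : N ≤ n * (j + 1) - (k + 1) := by
      have : N + (k + 1) ≤ n * (j + 1) := by
        calc N + (k + 1) = j + 1 := by omega
        _ = 1 * (j + 1) := (one_mul _).symm
        _ ≤ n * (j + 1) := Nat.mul_le_mul_right _ hn
      omega
    refine le_iSup (fun k : ℕ => Submodule.colon (K * I (n * (k + 1) + n)) (((I n) ^ (k + 1) : Ideal R) : Set R)) j ?_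
    refine colon_key (D := I (n * (j + 1) - (k + 1))) hx ?_ ?_
    · calc (I n) ^ (j + 1) ≤ I (n * (j + 1)) := hpown n (j + 1)
        _ = I ((n * (j + 1) - (k + 1)) + (k + 1)) := by congr 1; omega
        _ = I 1 ^ (k + 1) * I (n * (j + 1) - (k + 1)) := hstab _ _ hNle
    · refine le_trans (hImul _ _) ?_
      have : n + (k + 1) + (n * (j + 1) - (k + 1)) = n * (j + 1) + n := by omega
      rw [this]
  · refine iSup_le fun j => ?_
    intro x hx
    set k : ℕ := n * (j + 1) + N - 1 with hk
    have hk1 : k + 1 = n * (j + 1) + N := by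
      have : 1 ≤ n * (j + 1) := by
        calc 1 = 1 * 1 := rfl
        _ ≤ n * (j + 1) := Nat.mul_le_mul hn (by omega)
      omega
    refine le_iSup (fun k : ℕ => Submodule.colon (K * I (n + (k + 1))) (((I 1) ^ (k + 1) : Ideal R) : Set R)) k ?_
    refine colon_key (D := I N) hx ?_ ?_
    · calc I 1 ^ (k + 1) = I 1 ^ N * I 1 ^ (n * (j + 1)) := by
            rw [← pow_add, hk1]; ring_nf
        _ ≤ I N * (I 1 ^ n) ^ (j + 1) := by
            rw [← pow_mul]
            exact Ideal.mul_mono (hpow1 N) le_rfl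
        _ ≤ I N * (I n) ^ (j + 1) := by
            gcongr
            exact hpow1 n
        _ = (I n) ^ (j + 1) * I N := mul_comm _ _
    · refine le_trans (hImul _ _) ?_
      have : n * (j + 1) + n + N = n + (k + 1) := by omega
      rw [this]
end

section
/- If J is a minimal reduction of I_1, then rr_K(I_n) : J = rr_K(I_{n−1}) for all n ≥ 1. -/
set_option synthInstance.maxHeartbeats 1000000
set_option maxHeartbeats 1000000

open IsLocalRing Polynomial

/-- `J` is a reduction of `I`. -/
def IsReduction {R : Type*} [CommRing R] (J I : Ideal R) : Prop :=
  J ≤ I ∧ ∃ n : ℕ, J * I ^ n = I ^ (n + 1)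

/-- `J` is a minimal reduction of `I`: a reduction minimal with respect to inclusion. -/
def IsMinimalReduction {R : Type*} [CommRing R] (J I : Ideal R) : Prop :=
  IsReduction J I ∧ ∀ J' : Ideal R, IsReduction J' I → J' ≤ J → J' = J

section aux
variable {R : Type*} [CommRing R]

/-- Membership in the colon ideal, multiplicative form. -/
lemma mem_colon_iff' (N P : Ideal R) (x : R) :
    x ∈ Submodule.colon N P ↔ ∀ p ∈ P, x * p ∈ N := by
  simp [Submodule.mem_colon, smul_eq_mul]

/-- The colon ideals `(K·I_{m+k+1} : I_1^{k+1})` form an increasing chain in `k`. -/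
lemma chainC_mono (I : ℕ → Ideal R) (hImul : ∀ m n : ℕ, I m * I n ≤ I (m + n))
    (K : Ideal R) (m : ℕ) :
    Monotone fun k => Submodule.colon (K * I (m + (k + 1))) (((I 1) ^ (k + 1) : Ideal R) : Set R) := by
  apply monotone_nat_of_le_succ
  intro k x hx
  rw [mem_colon_iff'] at hx ⊢
  intro p hp
  rw [pow_succ] at hp
  have h2 : (K * I (m + (k + 1))) * I 1 ≤ K * I (m + (k + 1 + 1)) := by
    rw [mul_assoc]
    refine Ideal.mul_mono_right (le_trans (hImul (m + (k + 1)) 1) ?_)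
    have : m + (k + 1) + 1 = m + (k + 1 + 1) := by omega
    rw [this]
  refine Submodule.mul_induction_on hp ?_ ?_
  · intro a ha b hb
    rw [← mul_assoc]
    exact h2 (Ideal.mul_mem_mul (hx a ha) hb)
  · intro a b ha hb
    rw [mul_add]
    exact add_mem ha hb

/-- In a Noetherian ring the chain stabilizes, so `rr_K(I_m)` equals a single colon ideal. -/
lemma rrK_stab [IsNoetherianRing R] (I : ℕ → Ideal R)
    (hImul : ∀ m n : ℕ, I m * I n ≤ I (m + n)) (K : Ideal R) (m : ℕ) :
    ∃ k0 : ℕ, ∀ k ≥ k0,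
      rrK K I m = Submodule.colon (K * I (m + (k + 1))) (((I 1) ^ (k + 1) : Ideal R) : Set R) := by
  set f : ℕ →o Ideal R :=
    ⟨fun k => Submodule.colon (K * I (m + (k + 1))) (((I 1) ^ (k + 1) : Ideal R) : Set R),
     chainC_mono I hImul K m⟩ with hf
  obtain ⟨k0, hk0⟩ := monotone_stabilizes_iff_noetherian.mpr ‹IsNoetherianRing R› f
  refine ⟨k0, fun k hk => ?_⟩
  have hsup : rrK K I m = ⨆ j, f j := rfl
  rw [hsup]
  apply le_antisymm
  · refine iSup_le fun j => ?_
    rcases le_total j k with h | h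
    · exact f.mono h
    · exact le_of_eq ((hk0 j (le_trans hk h)).symm.trans (hk0 k hk))
  · exact le_iSup f k

end aux

/-- If `J` is a minimal reduction of `I_1`, then `rr_K(I_n) : J = rr_K(I_{n-1})` for all
`n ≥ 1`. -/
theorem stmt3 {R : Type*} [CommRing R] [IsNoetherianRing R] [IsLocalRing R]
    [Infinite (ResidueField R)]
    (hdim : (0 : WithBot ℕ∞) < ringKrullDim R)
    (I : ℕ → Ideal R) (K : Ideal R)
    (hI0 : I 0 = ⊤)
    (hImul : ∀ m n : ℕ, I m * I n ≤ I (m + n))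
    (hIstab : ∃ N : ℕ, ∀ n ≥ N, I 1 * I n = I (n + 1))
    (hIprim : (I 1).radical = maximalIdeal R)
    (hK : ∀ n : ℕ, I (n + 1) ≤ K * I n)
    (J : Ideal R) (hJ : IsMinimalReduction J (I 1)) :
    ∀ n : ℕ, Submodule.colon (rrK K I (n + 1)) J = rrK K I n := by
  obtain ⟨⟨hJle, m0, hred⟩, -⟩ := hJ
  have hpow : ∀ t : ℕ, (I 1) ^ t ≤ I t := by
    intro t
    induction t with
    | zero => simp [hI0]
    | succ t ih =>
        calc (I 1) ^ (t + 1) = (I 1) ^ t * I 1 := pow_succ _ _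
          _ ≤ I t * I 1 := Ideal.mul_mono_left ih
          _ ≤ I (t + 1) := hImul t 1
  intro n
  obtain ⟨k0, hk0⟩ := rrK_stab I hImul K (n + 1)
  apply le_antisymm
  · -- `(rr_K(I_{n+1}) : J) ≤ rr_K(I_n)`
    intro x hx
    rw [mem_colon_iff'] at hx
    have hxj : ∀ j ∈ J, ∀ q ∈ (I 1) ^ (k0 + 1), x * j * q ∈ K * I (n + 1 + (k0 + 1)) := by
      intro j hj q hq
      have h1 : x * j ∈ Submodule.colon (K * I (n + 1 + (k0 + 1))) (((I 1) ^ (k0 + 1) : Ideal R) : Set R) := by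
        rw [← hk0 k0 le_rfl]; exact hx j hj
      exact (mem_colon_iff' _ _ _).mp h1 q hq
    have stepA : Ideal.span {x} * (J * (I 1) ^ (k0 + 1)) ≤ K * I (n + 1 + (k0 + 1)) := by
      rw [Ideal.mul_le]
      intro r hr s hs
      obtain ⟨a, ha⟩ := Ideal.mem_span_singleton'.mp hr
      have hxs : x * s ∈ K * I (n + 1 + (k0 + 1)) := by
        refine Submodule.mul_induction_on hs ?_ ?_
        · intro j hj q hq
          rw [← mul_assoc]
          exact hxj j hj q hq
        · intro a b ha hb
          rw [mul_add]; exact add_mem ha hb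
      have : r * s = a * (x * s) := by rw [← ha]; ring
      rw [this]
      exact Ideal.mul_mem_left _ a hxs
    have stepB : Ideal.span {x} * (I 1) ^ (m0 + k0 + 1 + 1) ≤ K * I (n + (m0 + k0 + 1 + 1)) := by
      have e1 : (I 1) ^ (m0 + k0 + 1 + 1) = (J * (I 1) ^ (k0 + 1)) * (I 1) ^ m0 := by
        have : (I 1) ^ (m0 + k0 + 1 + 1) = (I 1) ^ (m0 + 1) * (I 1) ^ (k0 + 1) := by
          rw [← pow_add]; ring_nf
        rw [this, ← hred]
        ring
      rw [e1, ← mul_assoc]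
      calc Ideal.span {x} * (J * (I 1) ^ (k0 + 1)) * (I 1) ^ m0
          ≤ (K * I (n + 1 + (k0 + 1))) * (I 1) ^ m0 := Ideal.mul_mono_left stepA
        _ ≤ (K * I (n + 1 + (k0 + 1))) * I m0 := Ideal.mul_mono_right (hpow m0)
        _ = K * (I (n + 1 + (k0 + 1)) * I m0) := by rw [mul_assoc]
        _ ≤ K * I (n + 1 + (k0 + 1) + m0) := Ideal.mul_mono_right (hImul _ _)
        _ = K * I (n + (m0 + k0 + 1 + 1)) := by
            rw [show n + 1 + (k0 + 1) + m0 = n + (m0 + k0 + 1 + 1) by omega]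
    have key : x ∈ Submodule.colon (K * I (n + (m0 + k0 + 1 + 1))) (((I 1) ^ (m0 + k0 + 1 + 1) : Ideal R) : Set R) := by
      rw [mem_colon_iff']
      intro p hp
      exact stepB (Ideal.mul_mem_mul (Ideal.mem_span_singleton_self x) hp)
    exact le_iSup (fun k => Submodule.colon (K * I (n + (k + 1))) (((I 1) ^ (k + 1) : Ideal R) : Set R))
      (m0 + k0 + 1) key
  · -- `rr_K(I_n) ≤ (rr_K(I_{n+1}) : J)`
    intro x hx
    obtain ⟨k1, hk1⟩ := rrK_stab I hImul K n
    rw [hk1 k1 le_rfl, mem_colon_iff'] at hx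
    rw [Submodule.mem_colon]
    intro j hj
    have key : x * j ∈ Submodule.colon (K * I (n + 1 + (k1 + 1))) (((I 1) ^ (k1 + 1) : Ideal R) : Set R) := by
      rw [mem_colon_iff']
      intro q hq
      have h1 : x * q ∈ K * I (n + (k1 + 1)) := hx q hq
      have h2 : (x * q) * j ∈ (K * I (n + (k1 + 1))) * I 1 :=
        Ideal.mul_mem_mul h1 (hJle hj)
      have h3 : (K * I (n + (k1 + 1))) * I 1 ≤ K * I (n + 1 + (k1 + 1)) := by
        rw [mul_assoc]
        refine Ideal.mul_mono_right (le_trans (hImul (n + (k1 + 1)) 1) ?_)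
        rw [show n + (k1 + 1) + 1 = n + 1 + (k1 + 1) by omega]
      have : x * j * q = (x * q) * j := by ring
      rw [this]
      exact h3 h2
    have : x * j ∈ rrK K I (n + 1) :=
      le_iSup (fun k => Submodule.colon (K * I (n + 1 + (k + 1))) (((I 1) ^ (k + 1) : Ideal R) : Set R)) k1 key
    simpa [smul_eq_mul] using this
end
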